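/- arXiv:1102.5112 — 3 statements merged into one kernel-verified Lean document; each statement's English description precedes it below -/
import Mathlib

section
/- Let {W_n, Z_n} be pairs of discrete random variables with the size of the support of the conditional distribution of W_n given Z_n at most c^n for a constant c ≥ 1. Then sup_n E[((1/n) log P(W_n | Z_n))^2] < ∞, and hence the sequence {-(1/n) log P(W_n|Z_n)} is uniformly integrable. -/
lemma aux1 (x : ℝ) (hx : 0 < x) (hx1 : x ≤ 1) : x * (Real.log x)^2 ≤ 4 := by
  have hy : 0 ≤ -Real.log x := by
    simpa using Real.log_nonpos hx.le hx1
  have h1 : -Real.log x ≤ 2 * Real.exp (-Real.log x / 2) := by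
    have := Real.add_one_le_exp (-Real.log x / 2)
    nlinarith [Real.exp_pos (-Real.log x / 2)]
  have h2 : (Real.log x)^2 ≤ 4 * Real.exp (-Real.log x) := by
    have he : Real.exp (-Real.log x / 2) ^ 2 = Real.exp (-Real.log x) := by
      rw [← Real.exp_nat_mul]; ring_nf
    nlinarith [sq_nonneg (Real.log x), Real.exp_pos (-Real.log x / 2)]
  have hex : Real.exp (-Real.log x) = 1 / x := by
    rw [Real.exp_neg, Real.exp_log hx]; ring
  rw [hex] at h2
  calc x * (Real.log x)^2 ≤ x * (4 * (1/x)) :=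
        mul_le_mul_of_nonneg_left h2 hx.le
    _ = 4 := by field_simp

lemma aux2 (x : ℝ) (hx : 0 < x) (hx1 : x ≤ 1) : Real.sqrt x * (Real.log x)^2 ≤ 16 := by
  have hs : 0 < Real.sqrt x := Real.sqrt_pos.mpr hx
  have hs1 : Real.sqrt x ≤ 1 := by
    rw [show (1:ℝ) = Real.sqrt 1 by simp]
    exact Real.sqrt_le_sqrt hx1
  have hl : Real.log x = 2 * Real.log (Real.sqrt x) := by
    rw [Real.log_sqrt hx.le]; ring
  have := aux1 (Real.sqrt x) hs hs1
  rw [hl]; nlinarith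

lemma sum_bound (N : ℝ) (hN : 1 ≤ N) (s : Finset ℕ) (hcard : (s.card : ℝ) ≤ N)
    (q : ℕ → ℝ) (hq : ∀ w, 0 ≤ q w) (hsum : ∑ w ∈ s, q w ≤ 1) :
    ∑ w ∈ s, q w * (Real.log (q w))^2 ≤ 4 * (Real.log N)^2 + 16 := by
  have hN0 : 0 < N := lt_of_lt_of_le one_pos hN
  have hlogN : 0 ≤ Real.log N := Real.log_nonneg hN
  have hq1 : ∀ w ∈ s, q w ≤ 1 := fun w hw =>
    le_trans (Finset.single_le_sum (fun i _ => hq i) hw) hsum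
  classical
  rw [← Finset.sum_filter_add_sum_filter_not s (fun w => N⁻¹ * N⁻¹ ≤ q w)]
  have hA : ∑ w ∈ s.filter (fun w => N⁻¹ * N⁻¹ ≤ q w), q w * (Real.log (q w))^2
      ≤ 4 * (Real.log N)^2 := by
    have h1 : ∀ w ∈ s.filter (fun w => N⁻¹ * N⁻¹ ≤ q w),
        q w * (Real.log (q w))^2 ≤ q w * (2 * Real.log N)^2 := by
      intro w hw
      rw [Finset.mem_filter] at hw
      have hqpos : 0 < q w := lt_of_lt_of_le (by positivity) hw.2
      have hlow : -(2 * Real.log N) ≤ Real.log (q w) := by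
        have : Real.log (N⁻¹ * N⁻¹) ≤ Real.log (q w) := Real.log_le_log (by positivity) hw.2
        rw [Real.log_mul (by positivity) (by positivity), Real.log_inv] at this
        linarith
      have hhigh : Real.log (q w) ≤ 2 * Real.log N :=
        le_trans (Real.log_nonpos hqpos.le (hq1 w hw.1)) (by positivity)
      exact mul_le_mul_of_nonneg_left (sq_le_sq' hlow hhigh) (hq w)
    calc ∑ w ∈ s.filter (fun w => N⁻¹ * N⁻¹ ≤ q w), q w * (Real.log (q w))^2
        ≤ ∑ w ∈ s.filter (fun w => N⁻¹ * N⁻¹ ≤ q w), q w * (2 * Real.log N)^2 :=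
          Finset.sum_le_sum h1
      _ = (∑ w ∈ s.filter (fun w => N⁻¹ * N⁻¹ ≤ q w), q w) * (2 * Real.log N)^2 := by
          rw [← Finset.sum_mul]
      _ ≤ 1 * (2 * Real.log N)^2 := by
          apply mul_le_mul_of_nonneg_right _ (by positivity)
          exact le_trans (Finset.sum_le_sum_of_subset_of_nonneg (Finset.filter_subset _ _)
            (fun i _ _ => hq i)) hsum
      _ = 4 * (Real.log N)^2 := by ring
  have hB : ∑ w ∈ s.filter (fun w => ¬ N⁻¹ * N⁻¹ ≤ q w), q w * (Real.log (q w))^2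
      ≤ 16 := by
    have h2 : ∀ w ∈ s.filter (fun w => ¬ N⁻¹ * N⁻¹ ≤ q w),
        q w * (Real.log (q w))^2 ≤ 16 / N := by
      intro w hw
      rw [Finset.mem_filter] at hw
      have hlt : q w < N⁻¹ * N⁻¹ := lt_of_not_ge hw.2
      rcases eq_or_lt_of_le (hq w) with h0 | hpos
      · rw [← h0, zero_mul]; positivity
      · have hle1 : q w ≤ 1 := hq1 w hw.1
        have hsq : Real.sqrt (q w) * (Real.log (q w))^2 ≤ 16 := aux2 _ hpos hle1
        have hsqle : Real.sqrt (q w) ≤ N⁻¹ := by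
          rw [show (N⁻¹ : ℝ) = Real.sqrt (N⁻¹ * N⁻¹) by
            rw [Real.sqrt_mul_self (by positivity)]]
          exact Real.sqrt_le_sqrt hlt.le
        calc q w * (Real.log (q w))^2
            = Real.sqrt (q w) * (Real.sqrt (q w) * (Real.log (q w))^2) := by
              rw [← mul_assoc, Real.mul_self_sqrt (hq w)]
          _ ≤ Real.sqrt (q w) * 16 := by
              apply mul_le_mul_of_nonneg_left hsq (Real.sqrt_nonneg _)
          _ ≤ N⁻¹ * 16 := mul_le_mul_of_nonneg_right hsqle (by norm_num)
          _ = 16 / N := by rw [inv_mul_eq_div]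
    calc ∑ w ∈ s.filter (fun w => ¬ N⁻¹ * N⁻¹ ≤ q w), q w * (Real.log (q w))^2
        ≤ ∑ _w ∈ s.filter (fun w => ¬ N⁻¹ * N⁻¹ ≤ q w), 16 / N := Finset.sum_le_sum h2
      _ = (s.filter (fun w => ¬ N⁻¹ * N⁻¹ ≤ q w)).card * (16 / N) := by
          rw [Finset.sum_const, nsmul_eq_mul]
      _ ≤ N * (16 / N) := by
          apply mul_le_mul_of_nonneg_right _ (by positivity)
          exact le_trans (Nat.cast_le.mpr (Finset.card_le_card (Finset.filter_subset _ _))) hcard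
      _ = 16 := by field_simp
  exact add_le_add hA hB

open MeasureTheory

/-- If the support of the conditional distribution of W_n given Z_n has size at most
c^n (c ≥ 1), then sup_n E[((1/n) log₂ P(W_n|Z_n))²] < ∞, and the sequence
{-(1/n) log₂ P(W_n|Z_n)} is uniformly integrable. -/
theorem stmt7 {Ω : Type*} [MeasurableSpace Ω] (μ : Measure Ω) [IsProbabilityMeasure μ]
    (W Z : ℕ → Ω → ℕ) (hW : ∀ n, Measurable (W n)) (hZ : ∀ n, Measurable (Z n))
    (c : ℝ) (hc : 1 ≤ c)
    (p : ℕ → ℕ → ℕ → ℝ)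
    (hp : ∀ n w z, p n w z =
      (μ {ω | W n ω = w ∧ Z n ω = z}).toReal / (μ {ω | Z n ω = z}).toReal)
    (hsupp : ∀ n, ∀ᵐ ω ∂μ, ∃ s : Finset ℕ,
      (∀ w, 0 < p n w (Z n ω) → w ∈ s) ∧ (s.card : ℝ) ≤ c ^ n) :
    (∃ B : ℝ, ∀ n : ℕ,
        ∫ ω, ((1 / (n : ℝ)) * Real.logb 2 (p n (W n ω) (Z n ω))) ^ 2 ∂μ ≤ B) ∧
    (∀ ε > 0, ∃ a : ℝ, 0 < a ∧ ∀ n : ℕ,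
        ∫ ω in {ω | a ≤ |(1 / (n : ℝ)) * Real.logb 2 (p n (W n ω) (Z n ω))|},
          |(1 / (n : ℝ)) * Real.logb 2 (p n (W n ω) (Z n ω))| ∂μ ≤ ε) := by
  classical
  have hlog2 : 0 < Real.log 2 := Real.log_pos one_lt_two
  set B : ℝ := (4 * (Real.log c)^2 + 16) / (Real.log 2)^2 with hBdef
  have hB0 : 0 ≤ B := by positivity
  have hpnn : ∀ n w z, 0 ≤ p n w z := fun n w z => by
    rw [hp]; exact div_nonneg ENNReal.toReal_nonneg ENNReal.toReal_nonneg
  have hmeasf : ∀ n, Measurable (fun ω => (Real.logb 2 (p n (W n ω) (Z n ω)))^2) := by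
    intro n
    exact (measurable_of_countable (fun q : ℕ × ℕ => (Real.logb 2 (p n q.2 q.1))^2)).comp
      ((hZ n).prodMk (hW n))
  have hmeasX : ∀ n : ℕ, Measurable
      (fun ω => (1/(n:ℝ)) * Real.logb 2 (p n (W n ω) (Z n ω))) := by
    intro n
    exact (measurable_of_countable
      (fun q : ℕ × ℕ => (1/(n:ℝ)) * Real.logb 2 (p n q.2 q.1))).comp
      ((hZ n).prodMk (hW n))
  set M : ℕ → ℝ := fun n => (4 * ((n:ℝ) * Real.log c)^2 + 16) / (Real.log 2)^2 with hMdef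
  have hM0 : ∀ n, 0 ≤ M n := fun n => by
    apply div_nonneg _ (sq_nonneg _); positivity
  have key : ∀ n, Integrable (fun ω => (Real.logb 2 (p n (W n ω) (Z n ω)))^2) μ ∧
      ∫ ω, (Real.logb 2 (p n (W n ω) (Z n ω)))^2 ∂μ ≤ M n := by
    intro n
    set T : Ω → ℕ × ℕ := fun ω => (Z n ω, W n ω) with hTdef
    have hT : Measurable T := (hZ n).prodMk (hW n)
    set G : ℕ × ℕ → ℝ := fun q => (Real.logb 2 (p n q.2 q.1))^2 with hGdef
    have hGnn : ∀ q, 0 ≤ G q := fun q => sq_nonneg _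
    have hmap : ∀ z w, (μ.map T) {(z, w)} = μ ({ω | Z n ω = z} ∩ {ω | W n ω = w}) := by
      intro z w
      rw [Measure.map_apply hT (measurableSet_singleton _)]
      congr 1
      ext ω
      simp [hTdef, Prod.ext_iff]
    have hlin : ∫⁻ ω, ENNReal.ofReal (G (T ω)) ∂μ ≤ ENNReal.ofReal (M n) := by
      have h1 : ∫⁻ ω, ENNReal.ofReal (G (T ω)) ∂μ
          = ∫⁻ q, ENNReal.ofReal (G q) ∂(μ.map T) :=
        (lintegral_map (f := fun q => ENNReal.ofReal (G q)) (measurable_of_countable _) hT).symm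
      rw [h1, lintegral_countable', ENNReal.tsum_prod']
      have inner : ∀ z, (∑' w, ENNReal.ofReal (G (z, w)) * (μ.map T) {(z, w)})
          ≤ ENNReal.ofReal (M n) * μ {ω | Z n ω = z} := by
        intro z
        by_cases hz : μ {ω | Z n ω = z} = 0
        · have h0 : ∀ w, ENNReal.ofReal (G (z, w)) * (μ.map T) {(z, w)} = 0 := by
            intro w
            rw [hmap]
            have h00 : μ ({ω | Z n ω = z} ∩ {ω | W n ω = w}) = 0 :=
              le_antisymm (le_trans (measure_mono Set.inter_subset_left) hz.le) zero_le
            rw [h00, mul_zero]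
          rw [ENNReal.tsum_eq_zero.mpr h0]
          exact zero_le
        · -- extract a support finset for this z
          have hex : ∃ ω₀, Z n ω₀ = z ∧ ∃ s : Finset ℕ,
              (∀ w, 0 < p n w (Z n ω₀) → w ∈ s) ∧ (s.card : ℝ) ≤ c ^ n := by
            by_contra hcon
            push_neg at hcon
            apply hz
            have hae := hsupp n
            rw [ae_iff] at hae
            refine le_antisymm (le_trans (measure_mono ?_) hae.le) zero_le
            intro ω hω
            simp only [Set.mem_setOf_eq, not_exists, not_and]
            intro s hs
            exact not_le.mpr (hcon ω hω s hs)
          obtain ⟨ω₀, hω₀z, s, hs1, hs2⟩ := hex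
          rw [hω₀z] at hs1
          have hν_ne_top : μ {ω | Z n ω = z} ≠ ⊤ := measure_ne_top μ _
          have hνR : 0 < (μ {ω | Z n ω = z}).toReal := ENNReal.toReal_pos hz hν_ne_top
          have hset : ∀ w : ℕ, {ω | W n ω = w ∧ Z n ω = z}
              = {ω | Z n ω = z} ∩ {ω | W n ω = w} := by
            intro w; ext ω; simp only [Set.mem_setOf_eq, Set.mem_inter_iff]; tauto
          have hpw : ∀ w, p n w z =
              (μ ({ω | Z n ω = z} ∩ {ω | W n ω = w})).toReal
                / (μ {ω | Z n ω = z}).toReal := by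
            intro w; rw [hp, hset]
          have hAmeas : ∀ w : ℕ, MeasurableSet ({ω | Z n ω = z} ∩ {ω | W n ω = w}) :=
            fun w => ((hZ n) (measurableSet_singleton z)).inter
              ((hW n) (measurableSet_singleton w))
          have hμA : ∀ w, μ ({ω | Z n ω = z} ∩ {ω | W n ω = w})
              = ENNReal.ofReal (p n w z) * μ {ω | Z n ω = z} := by
            intro w
            rw [hpw w, ENNReal.ofReal_div_of_pos hνR,
              ENNReal.ofReal_toReal (measure_ne_top μ _), ENNReal.ofReal_toReal hν_ne_top,
              ENNReal.div_mul_cancel hz hν_ne_top]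
          have hdisj : Set.PairwiseDisjoint (↑s : Set ℕ)
              (fun w => {ω | Z n ω = z} ∩ {ω | W n ω = w}) :=
            fun i _ j _ hij => Set.disjoint_left.mpr
              (fun ω hi hj => hij (hi.2.symm.trans hj.2))
          have hsum1 : ∑ w ∈ s, p n w z ≤ 1 := by
            have hEq : ∑ w ∈ s, μ ({ω | Z n ω = z} ∩ {ω | W n ω = w})
                = μ (⋃ w ∈ s, ({ω | Z n ω = z} ∩ {ω | W n ω = w})) :=
              (measure_biUnion_finset hdisj (fun w _ => hAmeas w)).symm
            have hle : ∑ w ∈ s, μ ({ω | Z n ω = z} ∩ {ω | W n ω = w})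
                ≤ μ {ω | Z n ω = z} := by
              rw [hEq]
              apply measure_mono
              intro ω hω
              simp only [Set.mem_iUnion] at hω
              obtain ⟨w, _, hω1, _⟩ := hω
              exact hω1
            have h2 : ∑ w ∈ s, p n w z
                = (∑ w ∈ s, μ ({ω | Z n ω = z} ∩ {ω | W n ω = w})).toReal
                  / (μ {ω | Z n ω = z}).toReal := by
              rw [ENNReal.toReal_sum (fun w _ => measure_ne_top μ _), Finset.sum_div]
              exact Finset.sum_congr rfl fun w _ => hpw w
            rw [h2, div_le_one hνR]
            exact ENNReal.toReal_mono hν_ne_top hle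
          have hzero : ∀ w ∉ s,
              ENNReal.ofReal (G (z, w)) * (μ.map T) {(z, w)} = 0 := by
            intro w hw
            have hp0 : p n w z = 0 :=
              le_antisymm (not_lt.mp (fun h => hw (hs1 w h))) (hpnn n w z)
            have : G (z, w) = 0 := by simp [hGdef, hp0]
            rw [this, ENNReal.ofReal_zero, zero_mul]
          rw [tsum_eq_sum hzero]
          calc ∑ w ∈ s, ENNReal.ofReal (G (z, w)) * (μ.map T) {(z, w)}
              = ∑ w ∈ s, ENNReal.ofReal (p n w z * G (z, w)) * μ {ω | Z n ω = z} := by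
                refine Finset.sum_congr rfl fun w _ => ?_
                rw [hmap, hμA w, ENNReal.ofReal_mul (hpnn n w z)]
                ring
            _ = ENNReal.ofReal (∑ w ∈ s, p n w z * G (z, w)) * μ {ω | Z n ω = z} := by
                rw [← Finset.sum_mul, ← ENNReal.ofReal_sum_of_nonneg
                  (fun w _ => mul_nonneg (hpnn n w z) (hGnn _))]
            _ ≤ ENNReal.ofReal (M n) * μ {ω | Z n ω = z} := by
                apply mul_le_mul_left
                apply ENNReal.ofReal_le_ofReal
                have hGfor : ∀ w : ℕ, G (z, w)
                    = (Real.log (p n w z))^2 / (Real.log 2)^2 := by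
                  intro w; simp only [hGdef, Real.logb, div_pow]
                calc ∑ w ∈ s, p n w z * G (z, w)
                    = (∑ w ∈ s, p n w z * (Real.log (p n w z))^2) / (Real.log 2)^2 := by
                      rw [Finset.sum_div]
                      exact Finset.sum_congr rfl fun w _ => by rw [hGfor, mul_div_assoc]
                  _ ≤ (4 * (Real.log (c^n))^2 + 16) / (Real.log 2)^2 := by
                      exact (div_le_div_iff_of_pos_right (by positivity)).mpr
                        (sum_bound (c^n) (one_le_pow₀ hc) s hs2 (fun w => p n w z)
                          (fun w => hpnn n w z) hsum1)
                  _ = M n := by rw [hMdef]; rw [Real.log_pow]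
      refine le_trans (ENNReal.tsum_le_tsum inner) ?_
      rw [ENNReal.tsum_mul_left]
      have htot : ∑' z, μ {ω | Z n ω = z} = 1 := by
        calc ∑' z : ℕ, μ {ω | Z n ω = z} = μ (⋃ z : ℕ, {ω | Z n ω = z}) := by
              refine (measure_iUnion ?_ ?_).symm
              · intro i j hij
                exact Set.disjoint_left.mpr (fun ω hi hj => hij (hi.symm.trans hj))
              · exact fun z => (hZ n) (measurableSet_singleton z)
          _ = μ Set.univ := by congr 1; ext ω; simp
          _ = 1 := measure_univ
      rw [htot, mul_one]
    refine ⟨⟨(hmeasf n).aestronglyMeasurable, ?_⟩, ?_⟩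
    · rw [hasFiniteIntegral_iff_ofReal (ae_of_all μ fun ω => sq_nonneg _)]
      exact lt_of_le_of_lt hlin ENNReal.ofReal_lt_top
    · rw [integral_eq_lintegral_of_nonneg_ae (ae_of_all μ fun ω => sq_nonneg _)
        (hmeasf n).aestronglyMeasurable]
      refine le_trans (ENNReal.toReal_mono ENNReal.ofReal_ne_top hlin)
        (le_of_eq (ENNReal.toReal_ofReal (hM0 n)))
  -- the uniform bound on second moments
  have hbound : ∀ n : ℕ,
      ∫ ω, ((1/(n:ℝ)) * Real.logb 2 (p n (W n ω) (Z n ω)))^2 ∂μ ≤ B := by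
    intro n
    rcases Nat.eq_zero_or_pos n with h0 | hn
    · subst h0
      rw [show (fun ω => ((1/((0:ℕ):ℝ)) * Real.logb 2 (p 0 (W 0 ω) (Z 0 ω)))^2)
          = fun _ : Ω => (0:ℝ) by funext ω; norm_num]
      simpa using hB0
    · have hn1 : (1:ℝ) ≤ (n:ℝ) := by exact_mod_cast hn
      have hne : (n:ℝ) ≠ 0 := by positivity
      have hcalc : ∫ ω, ((1/(n:ℝ)) * Real.logb 2 (p n (W n ω) (Z n ω)))^2 ∂μ
          = (1/(n:ℝ))^2 * ∫ ω, (Real.logb 2 (p n (W n ω) (Z n ω)))^2 ∂μ := by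
        simp_rw [mul_pow]
        rw [integral_const_mul]
      rw [hcalc]
      calc (1/(n:ℝ))^2 * ∫ ω, (Real.logb 2 (p n (W n ω) (Z n ω)))^2 ∂μ
          ≤ (1/(n:ℝ))^2 * M n :=
            mul_le_mul_of_nonneg_left (key n).2 (by positivity)
        _ ≤ B := by
            rw [hMdef, hBdef]
            have h3 : (1/(n:ℝ))^2 * ((4 * ((n:ℝ) * Real.log c)^2 + 16) / (Real.log 2)^2)
                = (4 * (Real.log c)^2 + 16/(n:ℝ)^2) / (Real.log 2)^2 := by
              field_simp
            rw [h3]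
            apply (div_le_div_iff_of_pos_right (pow_pos hlog2 2)).mpr
            have h4 : 16/(n:ℝ)^2 ≤ 16 := div_le_self (by norm_num) (one_le_pow₀ hn1)
            linarith
  refine ⟨⟨B, hbound⟩, ?_⟩
  intro ε hε
  refine ⟨max 1 (B/ε), lt_of_lt_of_le one_pos (le_max_left _ _), ?_⟩
  intro n
  set a : ℝ := max 1 (B/ε) with hadef
  have ha : 0 < a := lt_of_lt_of_le one_pos (le_max_left _ _)
  have hX2int : Integrable
      (fun ω => ((1/(n:ℝ)) * Real.logb 2 (p n (W n ω) (Z n ω)))^2) μ := by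
    simp_rw [mul_pow]
    exact ((key n).1.const_mul _)
  have hXint : Integrable (fun ω => (1/(n:ℝ)) * Real.logb 2 (p n (W n ω) (Z n ω))) μ := by
    refine Integrable.mono' ((hX2int.add (integrable_const 1)).div_const 2)
      (hmeasX n).aestronglyMeasurable (ae_of_all μ fun ω => ?_)
    rw [Real.norm_eq_abs]
    simp only [Pi.add_apply]
    nlinarith [sq_nonneg (|(1/(n:ℝ)) * Real.logb 2 (p n (W n ω) (Z n ω))| - 1),
      sq_abs ((1/(n:ℝ)) * Real.logb 2 (p n (W n ω) (Z n ω))),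
      abs_nonneg ((1/(n:ℝ)) * Real.logb 2 (p n (W n ω) (Z n ω)))]
  have hSmeas : MeasurableSet
      {ω | a ≤ |(1/(n:ℝ)) * Real.logb 2 (p n (W n ω) (Z n ω))|} :=
    measurableSet_le measurable_const (hmeasX n).abs
  calc ∫ ω in {ω | a ≤ |(1/(n:ℝ)) * Real.logb 2 (p n (W n ω) (Z n ω))|},
        |(1/(n:ℝ)) * Real.logb 2 (p n (W n ω) (Z n ω))| ∂μ
      ≤ ∫ ω in {ω | a ≤ |(1/(n:ℝ)) * Real.logb 2 (p n (W n ω) (Z n ω))|},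
        ((1/(n:ℝ)) * Real.logb 2 (p n (W n ω) (Z n ω)))^2 / a ∂μ := by
        refine setIntegral_mono_on (hXint.abs.integrableOn)
          ((hX2int.div_const a).integrableOn) hSmeas (fun ω hω => ?_)
        rw [le_div_iff₀ ha]
        calc |(1/(n:ℝ)) * Real.logb 2 (p n (W n ω) (Z n ω))| * a
            ≤ |(1/(n:ℝ)) * Real.logb 2 (p n (W n ω) (Z n ω))|
              * |(1/(n:ℝ)) * Real.logb 2 (p n (W n ω) (Z n ω))| :=
              mul_le_mul_of_nonneg_left hω (abs_nonneg _)
          _ = ((1/(n:ℝ)) * Real.logb 2 (p n (W n ω) (Z n ω)))^2 := by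
              rw [abs_mul_abs_self]; ring
    _ ≤ ∫ ω, ((1/(n:ℝ)) * Real.logb 2 (p n (W n ω) (Z n ω)))^2 / a ∂μ :=
        setIntegral_le_integral (hX2int.div_const a) (ae_of_all μ fun ω => by positivity)
    _ = (∫ ω, ((1/(n:ℝ)) * Real.logb 2 (p n (W n ω) (Z n ω)))^2 ∂μ) / a :=
        integral_div a _
    _ ≤ B / a := (div_le_div_iff_of_pos_right ha).mpr (hbound n)
    _ ≤ ε := by
        rw [div_le_iff₀ ha]
        have h1 : B / ε ≤ a := le_max_right _ _
        calc B = (B/ε) * ε := by field_simp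
          _ ≤ a * ε := mul_le_mul_of_nonneg_right h1 hε.le
          _ = ε * a := mul_comm _ _
end

section
/- Let {Z_n} be a sequence of random variables with -(1/n) log P(Z_1,...,Z_n) → H almost surely for a finite constant H (the AEP), and let {M_n} be positive-integer-valued random variables on the same probability space with M_n/n → x almost surely for a constant x > 0. Then -(1/n) log P(Z_1,...,Z_{M_n}) → H·x almost surely. -/
open MeasureTheory Filter

/-- AEP along a random time: if -(1/n) log₂ P(Z_1,...,Z_n) → H a.s. and the
positive-integer-valued M_n satisfy M_n/n → x > 0 a.s., then
-(1/n) log₂ P(Z_1,...,Z_{M_n}) → H·x a.s.  Here P n ω is the probability of the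
realized length-n prefix of the process Z. -/
theorem stmt8 {Ω : Type*} [MeasurableSpace Ω] (μ : Measure Ω) [IsProbabilityMeasure μ]
    (Z : ℕ → Ω → ℕ) (M : ℕ → Ω → ℕ) (H x : ℝ) (hx : 0 < x)
    (hMpos : ∀ n ω, 0 < M n ω)
    (P : ℕ → Ω → ℝ)
    (hP : ∀ n ω, P n ω = (μ {ω' | ∀ k < n, Z k ω' = Z k ω}).toReal)
    (hAEP : ∀ᵐ ω ∂μ,
      Tendsto (fun n : ℕ => -(1 / (n : ℝ)) * Real.logb 2 (P n ω)) atTop (nhds H))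
    (hM : ∀ᵐ ω ∂μ,
      Tendsto (fun n : ℕ => (M n ω : ℝ) / n) atTop (nhds x)) :
    ∀ᵐ ω ∂μ,
      Tendsto (fun n : ℕ => -(1 / (n : ℝ)) * Real.logb 2 (P (M n ω) ω)) atTop
        (nhds (H * x)) := by
  filter_upwards [hAEP, hM] with ω hA hMω
  -- M n ω → ∞
  have hMreal : Tendsto (fun n : ℕ => ((M n ω : ℝ))) atTop atTop := by
    have h1 : Tendsto (fun n : ℕ => ((M n ω : ℝ) / n) * n) atTop atTop :=
      Tendsto.pos_mul_atTop hx hMω tendsto_natCast_atTop_atTop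
    refine h1.congr' ?_
    filter_upwards [eventually_ge_atTop 1] with n hn
    have : (n : ℝ) ≠ 0 := by positivity
    field_simp
  have hMnat : Tendsto (fun n : ℕ => M n ω) atTop atTop :=
    tendsto_natCast_atTop_iff.mp hMreal
  have hcomp : Tendsto (fun n : ℕ =>
      -(1 / (M n ω : ℝ)) * Real.logb 2 (P (M n ω) ω)) atTop (nhds H) :=
    hA.comp hMnat
  have hprod : Tendsto (fun n : ℕ =>
      ((M n ω : ℝ) / n) * (-(1 / (M n ω : ℝ)) * Real.logb 2 (P (M n ω) ω)))
      atTop (nhds (x * H)) := hMω.mul hcomp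
  rw [mul_comm H x]
  refine hprod.congr' ?_
  filter_upwards [eventually_ge_atTop 1] with n hn
  have hn' : (n : ℝ) ≠ 0 := by positivity
  have hm' : ((M n ω : ℝ)) ≠ 0 := by
    exact_mod_cast (hMpos n ω).ne'
  field_simp
end

section
/- Given the joint distribution p(T_{j-1}=0, Y_{j-1}=y) = (1+iα)/(2(1+i)) for each y ∈ {0,1}, and conditional distribution π(T_j=0, Y_j=y | Y_{j-1}=y, T_{j-1}=0) = (iα(1+γ) + (1-i)γ)/(1+iα), π(T_j=0, Y_j=ȳ | ·) = (1-γ)(1-i(1-α))/(1+iα), π(T_j=1, Y_j=ȳ | ·) = i(1-α)/(1+iα), π(T_j=1, Y_j=y | ·) = 0, the resulting conditional entropy H(T_j | T_{j-1}, Y_j, Y_{j-1}) equals [(1-γ+γi(1-α))/(1+i)] · h(i(1-α)/(1-γ+γi(1-α))), where h is the binary entropy function. -/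
/-- The conditional entropy H(T_j | T_{j-1}, Y_j, Y_{j-1}) computed from the
stationary joint law (T_{j-1}=0, Y_{j-1}=y) with mass (1+iα)/(2(1+i)) and the
conditional law of (T_j, Y_j): the contribution when Y_j = Y_{j-1} has entropy h 0
(T_j forced to 0), when Y_j ≠ Y_{j-1} it is h of the conditional probability of
T_j = 1, and the mass with T_{j-1} = 1 contributes h 0. The total equals
[(1-γ+γi(1-α))/(1+i)] h(i(1-α)/(1-γ+γi(1-α))). -/
theorem stmt14 (i α γ : ℝ) (hi : i ∈ Set.Ioo (0:ℝ) 1) (hα : α ∈ Set.Ioo (0:ℝ) 1)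
    (hγ : γ ∈ Set.Ioo (0:ℝ) 1)
    (h : ℝ → ℝ)
    (hh : ∀ p, h p = -p * Real.logb 2 p - (1 - p) * Real.logb 2 (1 - p)) :
    (∑ _y : Bool, ((1 + i * α) / (2 * (1 + i))) *
        (((i * α * (1 + γ) + (1 - i) * γ) / (1 + i * α)) * h 0
          + (((1 - γ) * (1 - i * (1 - α)) + i * (1 - α)) / (1 + i * α)) *
              h ((i * (1 - α) / (1 + i * α)) /
                  (((1 - γ) * (1 - i * (1 - α)) + i * (1 - α)) / (1 + i * α)))))
      + (1 - 2 * ((1 + i * α) / (2 * (1 + i)))) * h 0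
    = ((1 - γ + γ * i * (1 - α)) / (1 + i)) *
        h (i * (1 - α) / (1 - γ + γ * i * (1 - α))) := by
  obtain ⟨hi0, hi1⟩ := hi
  obtain ⟨hα0, hα1⟩ := hα
  obtain ⟨hγ0, hγ1⟩ := hγ
  have h0 : h 0 = 0 := by simp [hh 0]
  have hA : (1 : ℝ) + i * α ≠ 0 := by nlinarith
  have hB : (1 : ℝ) + i ≠ 0 := by nlinarith
  have hD : (1 - γ) * (1 - i * (1 - α)) + i * (1 - α) = 1 - γ + γ * i * (1 - α) := by
    ring
  have harg : (i * (1 - α) / (1 + i * α)) /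
      (((1 - γ) * (1 - i * (1 - α)) + i * (1 - α)) / (1 + i * α))
      = i * (1 - α) / (1 - γ + γ * i * (1 - α)) := by
    field_simp; rw [hD]
    have hE : (0:ℝ) < 1 - γ + γ * i * (1 - α) := by
      nlinarith [mul_pos (mul_pos hγ0 hi0) (sub_pos.mpr hα1)]
    rw [div_eq_one_iff_eq hE.ne']; ring
  rw [Finset.sum_const, h0, harg, hD]
  simp only [Finset.card_univ, Fintype.card_bool, nsmul_eq_mul]
  field_simp
  ring
end
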